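/- arXiv:2401.12833 — 2 statements merged into one kernel-verified Lean document; each statement's English description precedes it below -/
import Mathlib

section
/- For every v ∈ V, the function M_v⁻¹ : V → R is a K-class, i.e., for every edge (i,j) ∈ E the element 1 − e^{α(i,j)} divides M_v⁻¹(i) − M_v⁻¹(j) in R. -/
noncomputable section

/-- Standard basis vector `e_k` of `ℤ^{n+1}` (1-indexed), with `e 0 = 0`. -/
def ee (n k : ℕ) : Fin (n+1) → ℤ := fun t => if (t : ℕ) + 1 = k then 1 else 0

/-- The function `h : V → ℤ^{n+1}`. -/
def hh (n j : ℕ) : Fin (n+1) → ℤ :=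
  if j ≤ n+2 then ee n (j-1) - ee n (n+1) else ee n n - ee n (2*n+2-j)

/-- The Laurent polynomial ring `R = ℤ[y₁^{±1},…,y_{n+1}^{±1}]`. -/
abbrev Rg (n : ℕ) : Type := AddMonoidAlgebra ℤ (Fin (n+1) → ℤ)

/-- The monomial `e^w`. -/
def ex (n : ℕ) (w : Fin (n+1) → ℤ) : Rg n := AddMonoidAlgebra.single w 1

/-- `ī = 2n+3-i`. -/
def bar (n i : ℕ) : ℕ := 2*n+3 - i

/-- Membership in the vertex set `V = {1,…,2n+2}`. -/
def memV (n i : ℕ) : Prop := 1 ≤ i ∧ i ≤ 2*n+2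

/-- The axial function `α(i,j) = h(j) - h(i)`. -/
def axl (n i j : ℕ) : Fin (n+1) → ℤ := hh n j - hh n i

/-- The K-class `M_v`. -/
def Mv (n v : ℕ) (l : ℕ) : Rg n :=
  if l = v then 1
  else if l = bar n v then ex n (ee n n - ee n (n+1) - (2:ℤ) • hh n (bar n v))
  else ex n (hh n v - hh n l)

/-- The pointwise inverse `M_v⁻¹`. -/
def MvInv (n v : ℕ) (l : ℕ) : Rg n :=
  if l = v then 1
  else if l = bar n v then ex n (-(ee n n - ee n (n+1) - (2:ℤ) • hh n (bar n v)))
  else ex n (hh n l - hh n v)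

/-- A subset `P ⊆ V` is admissible if it is nonempty and contains no pair `{i, ī}`. -/
def admissible (n : ℕ) (P : Finset ℕ) : Prop :=
  P.Nonempty ∧ (∀ i ∈ P, memV n i) ∧ (∀ i ∈ P, bar n i ∉ P)

/-- The vertex set as a finset. -/
def Vfin (n : ℕ) : Finset ℕ := Finset.Icc 1 (2*n+2)

/-- The Thom class `Δ_P`. -/
def Dl (n : ℕ) (P : Finset ℕ) (l : ℕ) : Rg n :=
  if l ∈ P then
    ∏ k ∈ (Vfin n).filter (fun k => k ∉ P ∧ k ≠ bar n l), (1 - ex n (axl n l k))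
  else 0

/-- `φ : V → R` is a K-class if `1 - e^{α(i,j)}` divides `φ(i) - φ(j)` for every edge `(i,j)`. -/
def isKClass (n : ℕ) (f : ℕ → Rg n) : Prop :=
  ∀ i j : ℕ, memV n i → memV n j → j ≠ i → j ≠ bar n i →
    (1 - ex n (axl n i j)) ∣ (f i - f j)


lemma ex_mul (n : ℕ) (a b : Fin (n+1) → ℤ) : ex n a * ex n b = ex n (a + b) := by
  simp [ex, AddMonoidAlgebra.single_mul_single]

lemma ex_zero (n : ℕ) : ex n 0 = (1 : Rg n) := by
  simp [ex, AddMonoidAlgebra.one_def]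

lemma hh_add_bar (n v : ℕ) (hv : memV n v) :
    hh n v + hh n (bar n v) = ee n n - ee n (n+1) := by
  obtain ⟨h1, h2⟩ := hv
  unfold hh bar
  funext t
  rcases t with ⟨t, ht⟩
  by_cases hA : v ≤ n+2 <;> by_cases hB : 2*n+3-v ≤ n+2 <;>
    simp only [hA, hB, if_true, if_false, Pi.add_apply, Pi.sub_apply, ee] <;> split_ifs <;> omega

lemma MvInv_eq (n v : ℕ) (hv : memV n v) (l : ℕ) :
    MvInv n v l = ex n (hh n l - hh n v) := by
  unfold MvInv
  split_ifs with h1 h2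
  · subst h1; rw [sub_self, ex_zero]
  · subst h2
    congr 1
    have key := hh_add_bar n v hv
    have : hh n (bar n v) = ee n n - ee n (n+1) - hh n v := by
      rw [← key]; abel
    rw [this]; abel
  · rfl

/-- For every `v ∈ V`, the function `M_v⁻¹ : V → R` is a K-class. -/
theorem MvInv_isKClass (n : ℕ) (hn : 1 ≤ n) (v : ℕ) (hv : memV n v) :
    isKClass n (MvInv n v) := by
  intro i j hi hj hne hnbar
  rw [MvInv_eq n v hv i, MvInv_eq n v hv j]
  refine ⟨ex n (hh n i - hh n v), ?_⟩
  rw [sub_mul, one_mul, ex_mul]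
  congr 1
  unfold axl
  congr 1
  abel
end
end

section
/- (Relation 2) Let I ⊆ V be an admissible subset with |I| = n, and let b ∈ V be such that b ∉ I and b̄ ∉ I. Then, as functions V → R (operations pointwise), ∏_{i∈I}(1 − M_i) = Δ_{V∖(I∪{b})} + M_b · Δ_{V∖(I∪{b̄})}. -/
noncomputable section

section Aux

lemma mem_Vfin {n i : ℕ} : i ∈ Vfin n ↔ memV n i := Finset.mem_Icc

lemma bar_bar {n i : ℕ} (h : memV n i) : bar n (bar n i) = i := by
  obtain ⟨h1, h2⟩ := h; simp only [bar]; omega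

lemma memV_bar {n i : ℕ} (h : memV n i) : memV n (bar n i) := by
  obtain ⟨h1, h2⟩ := h; exact ⟨by simp [bar]; omega, by simp [bar]; omega⟩

lemma bar_ne_self {n i : ℕ} (h : memV n i) : i ≠ bar n i := by
  obtain ⟨h1, h2⟩ := h; simp only [bar]; omega

lemma ex_add (n : ℕ) (u v : Fin (n+1) → ℤ) : ex n (u + v) = ex n u * ex n v := by
  simp [ex, AddMonoidAlgebra.single_mul_single]

lemma hsum (n i : ℕ) (h : memV n i) :
    hh n i + hh n (bar n i) = ee n n - ee n (n+1) := by
  obtain ⟨h1, h2⟩ := h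
  funext t
  have ht : (t : ℕ) < n + 1 := t.isLt
  rw [bar]
  simp only [hh, bar, Pi.add_apply, Pi.sub_apply]
  by_cases hc1 : i ≤ n+2 <;> by_cases hc2 : 2*n+3-i ≤ n+2 <;>
    simp only [hc1, hc2, if_true, if_false, ite_true, ite_false, Pi.sub_apply, ee] <;>
    split_ifs <;> omega

lemma filter_compl (n : ℕ) (S : Finset ℕ) (hS : ∀ i ∈ S, i ∈ Vfin n) (m : ℕ) :
    (Vfin n).filter (fun k => k ∉ (Vfin n \ S) ∧ k ≠ m) = S.erase m := by
  ext k
  simp only [Finset.mem_filter, Finset.mem_sdiff, Finset.mem_erase, not_and, not_not]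
  constructor
  · rintro ⟨hk1, hk2, hk3⟩; exact ⟨hk3, hk2 hk1⟩
  · rintro ⟨hk3, hk2⟩; exact ⟨hS _ hk2, fun _ => hk2, hk3⟩

lemma tri (n : ℕ) (I : Finset ℕ) (hIV : ∀ i ∈ I, memV n i)
    (hadm : ∀ i ∈ I, bar n i ∉ I) (hcard : I.card = n)
    (b : ℕ) (hb : memV n b) (hbI : b ∉ I) (hbbarI : bar n b ∉ I)
    (l : ℕ) (hl : memV n l) (hlb : l ≠ b) (hlbb : l ≠ bar n b) :
    l ∈ I ∨ bar n l ∈ I := by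
  set f : ℕ → ℕ := fun i => min i (bar n i) with hf
  have key : ∀ i j, memV n i → memV n j → f i = f j → i = j ∨ i = bar n j := by
    intro i j hi hj h
    simp only [hf, bar, memV] at *
    omega
  have hfb : f b ∈ Finset.Icc 1 (n+1) := by
    obtain ⟨k1, k2⟩ := hb
    simp only [hf, bar, Finset.mem_Icc]; omega
  have himg : I.image f = (Finset.Icc 1 (n+1)).erase (f b) := by
    apply Finset.eq_of_subset_of_card_le
    · intro x hx
      simp only [Finset.mem_image] at hx
      obtain ⟨i, hiI, rfl⟩ := hx
      have hi := hIV i hiI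
      refine Finset.mem_erase.mpr ⟨?_, ?_⟩
      · intro h
        rcases key i b hi hb h with h' | h'
        · exact hbI (h' ▸ hiI)
        · exact hbbarI (h' ▸ hiI)
      · obtain ⟨k1, k2⟩ := hi
        simp only [hf, bar, Finset.mem_Icc]; omega
    · have hinj : Set.InjOn f ↑I := by
        intro i hiI j hjI h
        have hiI' := Finset.mem_coe.mp hiI
        have hjI' := Finset.mem_coe.mp hjI
        rcases key i j (hIV i hiI') (hIV j hjI') h with h' | h'
        · exact h'
        · exact absurd (h' ▸ hiI') (hadm j hjI')
      rw [Finset.card_erase_of_mem hfb, Nat.card_Icc, Finset.card_image_of_injOn hinj, hcard]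
      omega
  have hfl : f l ∈ I.image f := by
    rw [himg]
    refine Finset.mem_erase.mpr ⟨?_, ?_⟩
    · intro h
      rcases key l b hl hb h with h' | h'
      · exact hlb h'
      · exact hlbb h'
    · obtain ⟨k1, k2⟩ := hl
      simp only [hf, bar, Finset.mem_Icc]; omega
  obtain ⟨i, hiI, hfi⟩ := Finset.mem_image.mp hfl
  rcases key i l (hIV i hiI) hl hfi with h | h
  · exact Or.inl (h ▸ hiI)
  · exact Or.inr (h ▸ hiI)

end Aux

/-- Relation 2: for admissible `I ⊆ V` with `|I| = n` and `b ∈ V`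
with `b, b̄ ∉ I`, one has `∏_{i∈I}(1 - M_i) = Δ_{V∖(I∪{b})} + M_b · Δ_{V∖(I∪{b̄})}`
as functions `V → R`. -/
theorem relation2 (n : ℕ) (hn : 1 ≤ n) (I : Finset ℕ) (hI : admissible n I)
    (hcard : I.card = n) (b : ℕ) (hb : memV n b) (hbI : b ∉ I) (hbbarI : bar n b ∉ I) :
    ∀ l, memV n l →
      ∏ i ∈ I, (1 - Mv n i l) =
        Dl n (Vfin n \ insert b I) l + Mv n b l * Dl n (Vfin n \ insert (bar n b) I) l := by
  obtain ⟨hne, hIV, hadm⟩ := hI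
  intro l hl
  have hsubP : ∀ i ∈ insert b I, i ∈ Vfin n := by
    intro i hi
    rcases Finset.mem_insert.mp hi with rfl | hi
    · exact mem_Vfin.mpr hb
    · exact mem_Vfin.mpr (hIV i hi)
  have hsubQ : ∀ i ∈ insert (bar n b) I, i ∈ Vfin n := by
    intro i hi
    rcases Finset.mem_insert.mp hi with rfl | hi
    · exact mem_Vfin.mpr (memV_bar hb)
    · exact mem_Vfin.mpr (hIV i hi)
  by_cases hA : l ∈ I
  · rw [Finset.prod_eq_zero hA (by simp [Mv])]
    rw [Dl, if_neg (by simp [Finset.mem_sdiff, Finset.mem_insert, hA])]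
    rw [Dl, if_neg (by simp [Finset.mem_sdiff, Finset.mem_insert, hA])]
    ring
  · by_cases hC : l = b
    · subst hC
      rw [Dl, if_neg (by simp [Finset.mem_sdiff, Finset.mem_insert])]
      have hlQ : l ∈ Vfin n \ insert (bar n l) I := by
        rw [Finset.mem_sdiff, Finset.mem_insert]
        refine ⟨mem_Vfin.mpr hl, ?_⟩
        rintro (h | h)
        · exact bar_ne_self hl h
        · exact hA h
      rw [Dl, if_pos hlQ, filter_compl n (insert (bar n l) I) hsubQ (bar n l),
        Finset.erase_insert hbbarI]
      rw [Mv, if_pos rfl, zero_add, one_mul]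
      apply Finset.prod_congr rfl
      intro i hi
      have hi1 : l ≠ i := fun h => hA (h ▸ hi)
      have hi2 : l ≠ bar n i := by
        intro h
        have : i = bar n l := by rw [h, bar_bar (hIV i hi)]
        exact hbbarI (this ▸ hi)
      rw [Mv, if_neg hi1, if_neg hi2]
      simp only [axl]
    · by_cases hD : l = bar n b
      · subst hD
        have hbb : bar n (bar n b) = b := bar_bar hb
        have hQ0 : bar n b ∉ Vfin n \ insert (bar n b) I := by
          simp [Finset.mem_sdiff]
        have hlP : bar n b ∈ Vfin n \ insert b I := by
          rw [Finset.mem_sdiff, Finset.mem_insert]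
          refine ⟨mem_Vfin.mpr (memV_bar hb), ?_⟩
          rintro (h | h)
          · exact bar_ne_self hb h.symm
          · exact hA h
        rw [Dl, if_pos hlP, Dl, if_neg hQ0]
        simp only [hbb]
        rw [filter_compl n (insert b I) hsubP b, Finset.erase_insert hbI, mul_zero, add_zero]
        apply Finset.prod_congr rfl
        intro i hi
        have hi1 : bar n b ≠ i := fun h => hA (h ▸ hi)
        have hi2 : bar n b ≠ bar n i := by
          intro h
          have : i = b := by
            have h2 := congrArg (bar n) h
            rw [hbb, bar_bar (hIV i hi)] at h2
            exact h2.symm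
          exact hbI (this ▸ hi)
        rw [Mv, if_neg hi1, if_neg hi2]
        simp only [axl]
      · have hB : bar n l ∈ I := by
          rcases tri n I hIV hadm hcard b hb hbI hbbarI l hl hC hD with h | h
          · exact absurd h hA
          · exact h
        have hbarl : memV n (bar n l) := hIV _ hB
        have hbbl : bar n (bar n l) = l := bar_bar hl
        -- LHS
        rw [← Finset.mul_prod_erase I _ hB]
        have hMbarl : Mv n (bar n l) l = ex n (ee n n - ee n (n+1) - (2:ℤ) • hh n l) := by
          rw [Mv, hbbl, if_neg (bar_ne_self hl), if_pos rfl]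
        rw [hMbarl]
        have hprod : ∀ i ∈ I.erase (bar n l),
            (1 - Mv n i l) = (1 - ex n (axl n l i)) := by
          intro i hi
          obtain ⟨hine, hiI⟩ := Finset.mem_erase.mp hi
          have hi1 : l ≠ i := fun h => hA (h ▸ hiI)
          have hi2 : l ≠ bar n i := by
            intro h
            apply hine
            rw [h, bar_bar (hIV i hiI)]
          rw [Mv, if_neg hi1, if_neg hi2]
          simp only [axl]
        rw [Finset.prod_congr rfl hprod]
        -- RHS
        have hlP : l ∈ Vfin n \ insert b I := by
          rw [Finset.mem_sdiff, Finset.mem_insert]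
          refine ⟨mem_Vfin.mpr hl, ?_⟩
          rintro (h | h)
          · exact hC h
          · exact hA h
        have hlQ : l ∈ Vfin n \ insert (bar n b) I := by
          rw [Finset.mem_sdiff, Finset.mem_insert]
          refine ⟨mem_Vfin.mpr hl, ?_⟩
          rintro (h | h)
          · exact hD h
          · exact hA h
        have hbne : b ≠ bar n l := by
          intro h
          apply hD
          rw [h, bar_bar hl]
        have hbbne : bar n b ≠ bar n l := by
          intro h
          apply hC
          have := congrArg (bar n) h
          rw [bar_bar hb, hbbl] at this
          exact this.symm
        rw [Dl, if_pos hlP, filter_compl n (insert b I) hsubP (bar n l),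
          Finset.erase_insert_of_ne hbne,
          Finset.prod_insert (fun h => hbI (Finset.mem_of_mem_erase h))]
        rw [Dl, if_pos hlQ, filter_compl n (insert (bar n b) I) hsubQ (bar n l),
          Finset.erase_insert_of_ne hbbne,
          Finset.prod_insert (fun h => hbbarI (Finset.mem_of_mem_erase h))]
        have hMb : Mv n b l = ex n (axl n l b) := by
          rw [Mv, if_neg hC, if_neg hD]
          simp only [axl]
        rw [hMb]
        have key : ex n (axl n l b) * ex n (axl n l (bar n b)) =
            ex n (ee n n - ee n (n+1) - (2:ℤ) • hh n l) := by
          rw [← ex_add]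
          congr 1
          have hs := hsum n b hb
          rw [← hs]
          simp only [axl]
          abel
        linear_combination (∏ k ∈ I.erase (bar n l), (1 - ex n (axl n l k))) * key
end
end
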